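/- Let $A \colon E_1 \times \cdots \times E_n \to F$ be a continuous $n$-linear map between Banach spaces that is multiple $(r;r)$-summing for some $1 \le r < \infty$. Suppose that for each $k$, every sequence $(x_j^{(k)})_j \in \ell_1^w(E_k)$ can be factored as $x_j^{(k)} = a_j^{(k)} y_j^{(k)}$ with $(a_j^{(k)})_j \in \ell_{r'}$ (where $1/r + 1/r' = 1$) and $(y_j^{(k)})_j \in \ell_r^w(E_k)$. Then $A$ is multiple $(1;1)$-summing. -/

import Mathlib

open scoped BigOperators

/-- The weak `p`-norm of a finite family of vectors. -/
noncomputable def weakNorm {E : Type*} [NormedAddCommGroup E] [NormedSpace ℝ E]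
    (p : ℝ) {m : ℕ} (x : Fin m → E) : ℝ :=
  sSup {r | ∃ φ : E →L[ℝ] ℝ, ‖φ‖ ≤ 1 ∧ r = (∑ j, |φ (x j)| ^ p) ^ (1 / p)}

section WN
variable {E : Type*} [NormedAddCommGroup E] [NormedSpace ℝ E] {p : ℝ} {m : ℕ} {x : Fin m → E}

lemma weakNorm_set_nonempty (hp : p ≠ 0) (x : Fin m → E) :
    {r | ∃ φ : E →L[ℝ] ℝ, ‖φ‖ ≤ 1 ∧ r = (∑ j, |φ (x j)| ^ p) ^ (1 / p)}.Nonempty := by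
  refine ⟨0, 0, by simp, ?_⟩
  rw [show (∑ j, |(0 : E →L[ℝ] ℝ) (x j)| ^ p) = 0 from Finset.sum_eq_zero fun j _ => by
    simp [Real.zero_rpow hp], Real.zero_rpow (one_div_ne_zero hp)]

lemma weakNorm_set_bddAbove (hp : 0 < p) (x : Fin m → E) :
    BddAbove {r | ∃ φ : E →L[ℝ] ℝ, ‖φ‖ ≤ 1 ∧ r = (∑ j, |φ (x j)| ^ p) ^ (1 / p)} := by
  refine ⟨(∑ j, ‖x j‖ ^ p) ^ (1 / p), ?_⟩
  rintro r ⟨φ, hφ, rfl⟩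
  refine Real.rpow_le_rpow (Finset.sum_nonneg fun j _ => Real.rpow_nonneg (abs_nonneg _) _)
    (Finset.sum_le_sum fun j _ => ?_) (by positivity)
  refine Real.rpow_le_rpow (abs_nonneg _) ?_ hp.le
  calc |φ (x j)| = ‖φ (x j)‖ := rfl
    _ ≤ ‖φ‖ * ‖x j‖ := φ.le_opNorm _
    _ ≤ 1 * ‖x j‖ := by gcongr
    _ = ‖x j‖ := one_mul _

lemma le_weakNorm (hp : 0 < p) (x : Fin m → E) {φ : E →L[ℝ] ℝ} (hφ : ‖φ‖ ≤ 1) :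
    (∑ j, |φ (x j)| ^ p) ^ (1 / p) ≤ weakNorm p x :=
  le_csSup (weakNorm_set_bddAbove hp x) ⟨φ, hφ, rfl⟩

lemma weakNorm_nonneg (hp : 0 < p) (x : Fin m → E) : 0 ≤ weakNorm p x := by
  have := le_weakNorm hp x (φ := 0) (by simp)
  rw [show (∑ j, |(0 : E →L[ℝ] ℝ) (x j)| ^ p) = 0 from Finset.sum_eq_zero fun j _ => by
    simp [Real.zero_rpow hp.ne'], Real.zero_rpow (one_div_ne_zero hp.ne')] at this
  exact this

lemma weakNorm_le (hp : p ≠ 0) (x : Fin m → E) {b : ℝ}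
    (hb : ∀ φ : E →L[ℝ] ℝ, ‖φ‖ ≤ 1 → (∑ j, |φ (x j)| ^ p) ^ (1 / p) ≤ b) :
    weakNorm p x ≤ b := by
  refine csSup_le (weakNorm_set_nonempty hp x) ?_
  rintro r ⟨φ, hφ, rfl⟩; exact hb φ hφ

lemma weakNorm_smul (hp : 0 < p) {c : ℝ} (hc : 0 < c) (x : Fin m → E) :
    weakNorm p (fun j => c • x j) = c * weakNorm p x := by
  have key : ∀ (d : ℝ), 0 < d → ∀ (w : Fin m → E),
      weakNorm p (fun j => d • w j) ≤ d * weakNorm p w := by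
    intro d hd w
    refine weakNorm_le hp.ne' _ fun φ hφ => ?_
    have : ∀ j : Fin m, |φ (d • w j)| ^ p = d ^ p * |φ (w j)| ^ p := by
      intro j
      rw [map_smul, smul_eq_mul, abs_mul, abs_of_pos hd, Real.mul_rpow hd.le (abs_nonneg _)]
    rw [Finset.sum_congr rfl fun j _ => this j, ← Finset.mul_sum,
      Real.mul_rpow (Real.rpow_nonneg hd.le _)
        (Finset.sum_nonneg fun j _ => Real.rpow_nonneg (abs_nonneg _) _),
      ← Real.rpow_mul hd.le, mul_one_div, div_self hp.ne', Real.rpow_one]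
    exact mul_le_mul_of_nonneg_left (le_weakNorm hp w hφ) hd.le
  refine le_antisymm (key c hc x) ?_
  have h2 := key c⁻¹ (inv_pos.mpr hc) (fun j => c • x j)
  have : (fun j => c⁻¹ • c • x j) = x := by
    funext j; rw [smul_smul, inv_mul_cancel₀ hc.ne', one_smul]
  rw [this] at h2
  calc c * weakNorm p x ≤ c * (c⁻¹ * weakNorm p (fun j => c • x j)) :=
        mul_le_mul_of_nonneg_left h2 hc.le
    _ = weakNorm p (fun j => c • x j) := by field_simp
end WN

lemma conj_facts {r r' : ℝ} (hr : 1 < r) (hrr' : 1 / r + 1 / r' = 1) :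
    1 < r' ∧ (r - 1) * r' = r := by
  have hr0 : (0:ℝ) < r := by linarith
  have h1 : 1 / r < 1 := by rw [div_lt_one hr0]; exact hr
  have h2 : 0 < 1 / r := by positivity
  have h3 : 0 < 1 / r' := by linarith
  have hr'0 : (0:ℝ) < r' := by
    rcases lt_trichotomy r' 0 with h | h | h
    · exfalso; have : 1 / r' < 0 := by exact div_neg_of_pos_of_neg one_pos h
      linarith
    · exfalso; rw [h] at h3; simp at h3
    · exact h
  have hr'1 : 1 < r' := by
    by_contra h
    push_neg at h
    have : 1 ≤ 1 / r' := by
      rw [le_div_iff₀ hr'0]; linarith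
    linarith
  refine ⟨hr'1, ?_⟩
  have hne : r ≠ 0 := hr0.ne'
  have hne' : r' ≠ 0 := hr'0.ne'
  field_simp at hrr'
  nlinarith [hrr']

lemma abs_sign_le' (a : ℝ) : |Real.sign a| ≤ 1 := by
  rcases lt_trichotomy a 0 with h | h | h
  · rw [Real.sign_of_neg h]; norm_num
  · rw [h, Real.sign_zero]; norm_num
  · rw [Real.sign_of_pos h]; norm_num

lemma real_sign_mul_self (a : ℝ) : Real.sign a * a = |a| := by
  rcases lt_trichotomy a 0 with h | h | h
  · rw [Real.sign_of_neg h, abs_of_neg h]; ring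
  · simp [h]
  · rw [Real.sign_of_pos h, abs_of_pos h]; ring

lemma exists_dual_coeff {r r' : ℝ} (hr : 1 < r) (hrr' : 1 / r + 1 / r' = 1)
    (s : Finset ℕ) (t : ℕ → ℝ) :
    ∃ c : ℕ → ℝ, (∑ j ∈ s, |c j| ^ r') ≤ 1 ∧
      (∑ j ∈ s, |t j| ^ r) ^ (1 / r) ≤ ∑ j ∈ s, c j * t j := by
  obtain ⟨hr'1, hmul⟩ := conj_facts hr hrr'
  have hr0 : (0:ℝ) < r := by linarith
  have hr'0 : (0:ℝ) < r' := by linarith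
  set T := ∑ j ∈ s, |t j| ^ r with hT
  have hTnn : 0 ≤ T := Finset.sum_nonneg fun j _ => Real.rpow_nonneg (abs_nonneg _) _
  by_cases hT0 : T = 0
  · refine ⟨0, ?_, ?_⟩
    · simp [Real.zero_rpow hr'0.ne']
    · rw [hT0, Real.zero_rpow (one_div_ne_zero hr0.ne')]
      simp
  · have hTpos : 0 < T := lt_of_le_of_ne hTnn (Ne.symm hT0)
    refine ⟨fun j => Real.sign (t j) * |t j| ^ (r - 1) / T ^ (1 / r'), ?_, ?_⟩
    · have key : ∀ j ∈ s, |Real.sign (t j) * |t j| ^ (r - 1) / T ^ (1 / r')| ^ r'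
          ≤ |t j| ^ r / T := by
        intro j _
        have h1 : |Real.sign (t j) * |t j| ^ (r - 1) / T ^ (1 / r')|
            ≤ |t j| ^ (r - 1) / T ^ (1 / r') := by
          rw [abs_div, abs_mul, abs_of_pos (Real.rpow_pos_of_pos hTpos _),
            abs_of_nonneg (Real.rpow_nonneg (abs_nonneg _) _)]
          gcongr
          exact mul_le_of_le_one_left (Real.rpow_nonneg (abs_nonneg _) _) (abs_sign_le' _)
        calc |Real.sign (t j) * |t j| ^ (r - 1) / T ^ (1 / r')| ^ r'
            ≤ (|t j| ^ (r - 1) / T ^ (1 / r')) ^ r' := by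
              apply Real.rpow_le_rpow (abs_nonneg _) h1 hr'0.le
          _ = |t j| ^ r / T := by
              rw [Real.div_rpow (Real.rpow_nonneg (abs_nonneg _) _)
                  (Real.rpow_nonneg hTpos.le _),
                ← Real.rpow_mul (abs_nonneg _), ← Real.rpow_mul hTpos.le, hmul,
                show (1 / r') * r' = 1 from by field_simp, Real.rpow_one]
      calc (∑ j ∈ s, |Real.sign (t j) * |t j| ^ (r - 1) / T ^ (1 / r')| ^ r')
          ≤ ∑ j ∈ s, |t j| ^ r / T := Finset.sum_le_sum key
        _ = T / T := by rw [← Finset.sum_div]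
        _ = 1 := div_self hT0
    · have key : ∀ j ∈ s, Real.sign (t j) * |t j| ^ (r - 1) / T ^ (1 / r') * t j
          = |t j| ^ r / T ^ (1 / r') := by
        intro j _
        have h2 : |t j| * |t j| ^ (r - 1) = |t j| ^ r := by
          by_cases h : t j = 0
          · simp [h, Real.zero_rpow (by linarith : r - 1 ≠ 0),
              Real.zero_rpow hr0.ne']
          · have hpos : 0 < |t j| := abs_pos.mpr h
            nth_rewrite 1 [← Real.rpow_one |t j|]
            rw [← Real.rpow_add hpos]
            ring_nf
        calc Real.sign (t j) * |t j| ^ (r - 1) / T ^ (1 / r') * t j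
            = (Real.sign (t j) * t j) * |t j| ^ (r - 1) / T ^ (1 / r') := by ring
          _ = |t j| * |t j| ^ (r - 1) / T ^ (1 / r') := by rw [real_sign_mul_self]
          _ = |t j| ^ r / T ^ (1 / r') := by rw [h2]
      rw [Finset.sum_congr rfl key, ← Finset.sum_div, ← hT]
      rw [show (1 : ℝ) / r = 1 - 1 / r' by linarith]
      rw [Real.rpow_sub hTpos, Real.rpow_one]

/-- Membership in `ℓ_p^w(E)` for a sequence. -/
def MemWeakLp {E : Type*} [NormedAddCommGroup E] [NormedSpace ℝ E]
    (p : ℝ) (x : ℕ → E) : Prop :=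
  ∀ φ : E →L[ℝ] ℝ, ‖φ‖ ≤ 1 → Summable (fun j => |φ (x j)| ^ p)

lemma sum_abs_rpow_smul {ι : Type*} {c q : ℝ} (hc : 0 ≤ c) (hq : 0 < q)
    (s : Finset ι) (a : ι → ℝ) :
    (∑ j ∈ s, |c * a j| ^ q) ^ (1 / q) = c * (∑ j ∈ s, |a j| ^ q) ^ (1 / q) := by
  have : ∀ j ∈ s, |c * a j| ^ q = c ^ q * |a j| ^ q := fun j _ => by
    rw [abs_mul, abs_of_nonneg hc, Real.mul_rpow hc (abs_nonneg _)]
  rw [Finset.sum_congr rfl this, ← Finset.mul_sum,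
    Real.mul_rpow (Real.rpow_nonneg hc _)
      (Finset.sum_nonneg fun j _ => Real.rpow_nonneg (abs_nonneg _) _),
    ← Real.rpow_mul hc, mul_one_div, div_self hq.ne', Real.rpow_one]

lemma eq_zero_of_weakNorm_one_eq_zero {E : Type*} [NormedAddCommGroup E] [NormedSpace ℝ E]
    {m : ℕ} {x : Fin m → E} (h : weakNorm 1 x = 0) (j : Fin m) : x j = 0 := by
  by_contra hj
  obtain ⟨φ, hφ1, hφx⟩ := exists_dual_vector ℝ (x j) (norm_ne_zero_iff.mpr hj)
  have h1 := le_weakNorm one_pos x (φ := φ) hφ1.le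
  rw [h] at h1
  have habs : |φ (x j)| = ‖x j‖ := by
    rw [hφx]; simp
  have h2 : ‖x j‖ ≤ ∑ j', |φ (x j')| ^ (1:ℝ) := by
    calc ‖x j‖ = |φ (x j)| ^ (1:ℝ) := by rw [Real.rpow_one, habs]
      _ ≤ ∑ j', |φ (x j')| ^ (1:ℝ) :=
        Finset.single_le_sum (f := fun j' => |φ (x j')| ^ (1:ℝ))
          (fun j' _ => Real.rpow_nonneg (abs_nonneg _) _) (Finset.mem_univ j)
  have h3 : (0:ℝ) < ‖x j‖ := norm_pos_iff.mpr hj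
  have h4 : ((∑ j', |φ (x j')| ^ (1:ℝ)) : ℝ) ^ ((1:ℝ)/1) = ∑ j', |φ (x j')| ^ (1:ℝ) := by
    norm_num
  rw [h4] at h1
  linarith

lemma uniform_fact {E : Type*} [NormedAddCommGroup E] [NormedSpace ℝ E] {r r' : ℝ}
    (hr : 1 < r) (hrr' : 1 / r + 1 / r' = 1)
    (hf : ∀ x : ℕ → E, MemWeakLp 1 x → ∃ (a : ℕ → ℝ) (y : ℕ → E),
      (∀ j, x j = a j • y j) ∧ Summable (fun j => |a j| ^ r') ∧ MemWeakLp r y) :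
    ∃ D, 0 ≤ D ∧ ∀ (m : ℕ) (x : Fin m → E), ∃ (a : Fin m → ℝ) (y : Fin m → E),
      (∀ j, x j = a j • y j) ∧ (∑ j, |a j| ^ r') ^ (1 / r') ≤ D * weakNorm 1 x ∧
        weakNorm r y ≤ 1 := by
  obtain ⟨hr'1, hmul⟩ := conj_facts hr hrr'
  have hr0 : (0:ℝ) < r := by linarith
  have hr'0 : (0:ℝ) < r' := by linarith
  by_contra hcon
  push_neg at hcon
  -- Step A: normalized counterexamples
  have stepA : ∀ N : ℕ, ∃ (m : ℕ) (x : Fin m → E), weakNorm 1 x = 1 ∧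
      ∀ (a : Fin m → ℝ) (y : Fin m → E), (∀ j, x j = a j • y j) → weakNorm r y ≤ 1 →
        (4:ℝ) ^ N < (∑ j, |a j| ^ r') ^ (1 / r') := by
    intro N
    obtain ⟨m, x, hx⟩ := hcon ((4:ℝ) ^ N) (by positivity)
    have ht0 : weakNorm 1 x ≠ 0 := by
      intro h0
      have hx0 : ∀ j, x j = 0 := eq_zero_of_weakNorm_one_eq_zero h0
      have hbound : ((∑ j : Fin m, |(0:ℝ)| ^ r') : ℝ) ^ (1 / r') ≤ (4:ℝ) ^ N * weakNorm 1 x := by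
        have : (∑ j : Fin m, |(0:ℝ)| ^ r') = 0 := by simp [Real.zero_rpow hr'0.ne']
        rw [this, Real.zero_rpow (one_div_ne_zero hr'0.ne'), h0, mul_zero]
      have h2 := hx (fun _ => 0) (fun _ => 0) (fun j => by simp [hx0 j]) hbound
      have h3 : weakNorm r (fun _ : Fin m => (0:E)) ≤ 1 := by
        refine weakNorm_le hr0.ne' _ fun φ hφ => ?_
        have : (∑ j : Fin m, |φ ((0:E))| ^ r) = 0 := by
          simp [Real.zero_rpow hr0.ne']
        rw [this, Real.zero_rpow (one_div_ne_zero hr0.ne')]; norm_num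
      exact absurd h3 (not_le.mpr h2)
    have tpos : 0 < weakNorm 1 x := lt_of_le_of_ne (weakNorm_nonneg one_pos x) (Ne.symm ht0)
    set t := weakNorm 1 x with htdef
    refine ⟨m, fun j => t⁻¹ • x j, ?_, ?_⟩
    · rw [weakNorm_smul one_pos (inv_pos.mpr tpos) x, inv_mul_cancel₀ tpos.ne']
    · intro a y hfac hwy
      by_contra hle
      push_neg at hle
      have hfac' : ∀ j, x j = (t * a j) • y j := by
        intro j
        have : x j = t • (t⁻¹ • x j) := by
          rw [smul_smul, mul_inv_cancel₀ tpos.ne', one_smul]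
        rw [this, show t⁻¹ • x j = a j • y j from hfac j, smul_smul]
      have hbound' : ((∑ j, |t * a j| ^ r') : ℝ) ^ (1 / r') ≤ (4:ℝ) ^ N * t := by
        rw [sum_abs_rpow_smul tpos.le hr'0]
        calc t * (∑ j, |a j| ^ r') ^ (1 / r') ≤ t * ((4:ℝ) ^ N * 1) := by
              rw [mul_one]; exact mul_le_mul_of_nonneg_left hle tpos.le
          _ = (4:ℝ) ^ N * t := by ring
      exact absurd hwy (not_le.mpr (hx (fun j => t * a j) y hfac' hbound'))
  choose m_ x_ hx1 hx2 using stepA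
  -- padded families
  set xt : ℕ × ℕ → E := fun p => if h : p.2 < m_ p.1 then x_ p.1 ⟨p.2, h⟩ else 0 with hxt
  set z : ℕ → E := fun j => ((2:ℝ)⁻¹) ^ (Nat.unpair j).1 • xt (Nat.unpair j) with hz
  have hzval : ∀ N k : ℕ, z (Nat.pairEquiv (N, k)) = ((2:ℝ)⁻¹) ^ N • xt (N, k) := by
    intro N k
    simp only [hz, Nat.pairEquiv_apply, Function.uncurry, Nat.unpair_pair]
  -- weak-ℓ¹ partial-sum bound for each block
  have hblock : ∀ (φ : E →L[ℝ] ℝ), ‖φ‖ ≤ 1 → ∀ N : ℕ,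
      ∑ k ∈ Finset.range (m_ N), |φ (xt (N, k))| ≤ 1 := by
    intro φ hφ N
    have h1 : ∑ k ∈ Finset.range (m_ N), |φ (xt (N, k))| = ∑ j : Fin (m_ N), |φ (x_ N j)| := by
      rw [← Fin.sum_univ_eq_sum_range (fun k => |φ (xt (N, k))|)]
      refine Finset.sum_congr rfl fun j _ => ?_
      have : xt (N, (j : ℕ)) = x_ N j := by
        simp only [hxt]
        rw [dif_pos j.isLt]
      rw [this]
    have h2 := le_weakNorm one_pos (x_ N) (φ := φ) hφ
    rw [hx1 N] at h2
    have h3 : ((∑ j : Fin (m_ N), |φ (x_ N j)| ^ (1:ℝ)) : ℝ) ^ ((1:ℝ)/1)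
        = ∑ j : Fin (m_ N), |φ (x_ N j)| := by
      norm_num
    rw [h3] at h2
    rw [h1]; exact h2
  have memz : MemWeakLp 1 z := by
    intro φ hφ
    simp only [Real.rpow_one]
    rw [← Nat.pairEquiv.summable_iff]
    have heq : ∀ p : ℕ × ℕ, |φ (z (Nat.pairEquiv p))| = ((2:ℝ)⁻¹) ^ p.1 * |φ (xt p)| := by
      intro ⟨N, k⟩
      rw [hzval N k, map_smul, smul_eq_mul, abs_mul, abs_of_nonneg (by positivity)]
    rw [show ((fun j => |φ (z j)|) ∘ ⇑Nat.pairEquiv)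
        = fun p : ℕ × ℕ => ((2:ℝ)⁻¹) ^ p.1 * |φ (xt p)| from funext heq]
    rw [summable_prod_of_nonneg (fun p => by positivity)]
    have hfib : ∀ N, Summable fun k => ((2:ℝ)⁻¹) ^ N * |φ (xt (N, k))| := by
      intro N
      apply summable_of_ne_finset_zero (s := Finset.range (m_ N))
      intro k hk
      rw [Finset.mem_range, not_lt] at hk
      have : xt (N, k) = 0 := by simp only [hxt]; rw [dif_neg (by omega)]
      rw [this, map_zero, abs_zero, mul_zero]
    refine ⟨hfib, ?_⟩
    refine Summable.of_nonneg_of_le (fun N => tsum_nonneg fun k => by positivity)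
      (fun N => ?_) (summable_geometric_of_lt_one (by norm_num) (by norm_num : (2:ℝ)⁻¹ < 1))
    have htse : ∑' k, ((2:ℝ)⁻¹) ^ N * |φ (xt (N, k))|
        = ∑ k ∈ Finset.range (m_ N), ((2:ℝ)⁻¹) ^ N * |φ (xt (N, k))| := by
      apply tsum_eq_sum
      intro k hk
      rw [Finset.mem_range, not_lt] at hk
      have : xt (N, k) = 0 := by simp only [hxt]; rw [dif_neg (by omega)]
      rw [this, map_zero, abs_zero, mul_zero]
    rw [htse, ← Finset.mul_sum]
    calc ((2:ℝ)⁻¹) ^ N * ∑ k ∈ Finset.range (m_ N), |φ (xt (N, k))|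
        ≤ ((2:ℝ)⁻¹) ^ N * 1 := by
          exact mul_le_mul_of_nonneg_left (hblock φ hφ N) (by positivity)
      _ = ((2:ℝ)⁻¹) ^ N := mul_one _
  -- Step C: factor z
  obtain ⟨a, y, hzf, hsa, hy⟩ := hf z memz
  set α : ℝ := (∑' j, |a j| ^ r') ^ (1 / r') with hα
  have hαnn : 0 ≤ α := Real.rpow_nonneg (tsum_nonneg fun j => Real.rpow_nonneg (abs_nonneg _) _) _
  -- Step D: Banach–Steinhaus to bound the weak r norm of y uniformly
  have hpq : Real.HolderConjugate r' r := Real.holderConjugate_iff.mpr ⟨hr'1, by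
    rw [inv_eq_one_div, inv_eq_one_div]; linarith⟩
  obtain ⟨β, hβ⟩ : ∃ β : ℝ, ∀ i : {sc : Finset ℕ × (ℕ → ℝ) // ∑ j ∈ sc.1, |sc.2 j| ^ r' ≤ 1},
      ‖NormedSpace.inclusionInDoubleDualLi ℝ (E := E) (∑ j ∈ i.1.1, i.1.2 j • y j)‖ ≤ β := by
    apply banach_steinhaus
    intro φ
    by_cases hφ0 : φ = 0
    · exact ⟨0, fun i => by rw [hφ0]; simp⟩
    have hφpos : 0 < ‖φ‖ := norm_pos_iff.mpr hφ0
    set ψ : E →L[ℝ] ℝ := ‖φ‖⁻¹ • φ with hψdef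
    have hψ : ‖ψ‖ ≤ 1 := by
      rw [hψdef]
      refine ContinuousLinearMap.opNorm_le_bound _ zero_le_one fun v => ?_
      rw [ContinuousLinearMap.smul_apply, norm_smul, norm_inv, norm_norm, one_mul]
      calc ‖φ‖⁻¹ * ‖φ v‖ ≤ ‖φ‖⁻¹ * (‖φ‖ * ‖v‖) :=
            mul_le_mul_of_nonneg_left (φ.le_opNorm v) (by positivity)
        _ = ‖v‖ := by field_simp
    have hsum := hy ψ hψ
    refine ⟨‖φ‖ * (∑' j, |ψ (y j)| ^ r) ^ (1 / r), fun i => ?_⟩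
    obtain ⟨⟨s, c⟩, hc⟩ := i
    have happ : (NormedSpace.inclusionInDoubleDualLi ℝ (E := E) (∑ j ∈ s, c j • y j)) φ
        = φ (∑ j ∈ s, c j • y j) := rfl
    rw [happ]
    set u : E := ∑ j ∈ s, c j • y j with hu
    have hψu : |ψ u| ≤ (∑' j, |ψ (y j)| ^ r) ^ (1 / r) := by
      have h1 : ψ u = ∑ j ∈ s, c j * ψ (y j) := by
        rw [hu, map_sum]
        exact Finset.sum_congr rfl fun j _ => by rw [map_smul, smul_eq_mul]
      calc |ψ u| ≤ ∑ j ∈ s, |c j| * |ψ (y j)| := by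
            rw [h1]
            refine (Finset.abs_sum_le_sum_abs _ _).trans ?_
            exact le_of_eq (Finset.sum_congr rfl fun j _ => abs_mul _ _)
        _ ≤ (∑ j ∈ s, |(|c j|)| ^ r') ^ (1 / r') * (∑ j ∈ s, |(|ψ (y j)|)| ^ r) ^ (1 / r) :=
            Real.inner_le_Lp_mul_Lq s (fun j => |c j|) (fun j => |ψ (y j)|) hpq
        _ ≤ 1 * (∑' j, |ψ (y j)| ^ r) ^ (1 / r) := by
            simp only [abs_abs]
            refine mul_le_mul ?_ ?_ (by positivity) (by norm_num)
            · exact Real.rpow_le_one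
                (Finset.sum_nonneg fun j _ => Real.rpow_nonneg (abs_nonneg _) _) hc
                (by positivity)
            · refine Real.rpow_le_rpow
                (Finset.sum_nonneg fun j _ => Real.rpow_nonneg (abs_nonneg _) _)
                (Summable.sum_le_tsum s (fun j _ => Real.rpow_nonneg (abs_nonneg _) _) hsum)
                (by positivity)
        _ = (∑' j, |ψ (y j)| ^ r) ^ (1 / r) := one_mul _
    have hφψ : φ u = ‖φ‖ * ψ u := by
      rw [hψdef]; simp only [ContinuousLinearMap.smul_apply, smul_eq_mul]
      field_simp
    calc ‖φ u‖ = |φ u| := rfl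
      _ = ‖φ‖ * |ψ u| := by rw [hφψ, abs_mul, abs_of_pos hφpos]
      _ ≤ ‖φ‖ * (∑' j, |ψ (y j)| ^ r) ^ (1 / r) :=
          mul_le_mul_of_nonneg_left hψu hφpos.le
  have hiso : ∀ (v : E), ‖NormedSpace.inclusionInDoubleDualLi ℝ (E := E) v‖ = ‖v‖ :=
    fun v => (NormedSpace.inclusionInDoubleDualLi ℝ (E := E)).norm_map v
  have hub : ∀ (s : Finset ℕ) (c : ℕ → ℝ), (∑ j ∈ s, |c j| ^ r') ≤ 1 →
      ‖∑ j ∈ s, c j • y j‖ ≤ β := by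
    intro s c hc
    have := hβ ⟨(s, c), hc⟩
    rwa [hiso] at this
  set β0 : ℝ := max β 0 with hβ0
  have hβ0nn : 0 ≤ β0 := le_max_right _ _
  -- Step E: uniform weak r partial sum bound for y
  have hyb : ∀ (φ : E →L[ℝ] ℝ), ‖φ‖ ≤ 1 → ∀ s : Finset ℕ,
      (∑ j ∈ s, |φ (y j)| ^ r) ^ (1 / r) ≤ β0 := by
    intro φ hφ s
    obtain ⟨c, hc1, hc2⟩ := exists_dual_coeff hr hrr' s (fun j => φ (y j))
    refine hc2.trans ?_
    have h1 : ∑ j ∈ s, c j * φ (y j) = φ (∑ j ∈ s, c j • y j) := by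
      rw [map_sum]
      exact (Finset.sum_congr rfl fun j _ => by rw [map_smul, smul_eq_mul]).symm
    rw [h1]
    calc φ (∑ j ∈ s, c j • y j) ≤ |φ (∑ j ∈ s, c j • y j)| := le_abs_self _
      _ ≤ ‖φ‖ * ‖∑ j ∈ s, c j • y j‖ := φ.le_opNorm _
      _ ≤ 1 * β := mul_le_mul hφ (hub s c hc1) (norm_nonneg _) zero_le_one
      _ = β := one_mul _
      _ ≤ β0 := le_max_left _ _
  -- Step F: contradiction
  obtain ⟨N, hN⟩ := pow_unbounded_of_one_lt ((β0 + 1) * α) (one_lt_two (α := ℝ))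
  have hb1 : (0:ℝ) < β0 + 1 := by linarith
  set w : Fin (m_ N) → E := fun k => y (Nat.pairEquiv (N, (k : ℕ))) with hw
  set aa : Fin (m_ N) → ℝ :=
    fun k => ((β0 + 1) * 2 ^ N) * a (Nat.pairEquiv (N, (k : ℕ))) with haa
  set yy : Fin (m_ N) → E := fun k => (β0 + 1)⁻¹ • w k with hyy
  -- the image finset for block N
  set sN : Finset ℕ := (Finset.range (m_ N)).image (fun k => Nat.pairEquiv (N, k)) with hsN
  have hinj : ∀ k1 ∈ Finset.range (m_ N), ∀ k2 ∈ Finset.range (m_ N),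
      Nat.pairEquiv (N, k1) = Nat.pairEquiv (N, k2) → k1 = k2 := by
    intro k1 _ k2 _ h
    have := Nat.pairEquiv.injective h
    simpa using this
  have hfact : ∀ k, x_ N k = aa k • yy k := by
    intro k
    have h1 : xt (N, (k : ℕ)) = x_ N k := by
      simp only [hxt]; rw [dif_pos k.isLt]
    have h2 : z (Nat.pairEquiv (N, (k : ℕ)))
        = a (Nat.pairEquiv (N, (k : ℕ))) • y (Nat.pairEquiv (N, (k : ℕ))) := hzf _
    have h3 : x_ N k = ((2:ℝ) ^ N * a (Nat.pairEquiv (N, (k : ℕ)))) • w k := by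
      rw [← h1]
      have : xt (N, (k : ℕ)) = (2:ℝ) ^ N • z (Nat.pairEquiv (N, (k : ℕ))) := by
        rw [hzval, smul_smul]
        rw [show (2:ℝ) ^ N * (2:ℝ)⁻¹ ^ N = 1 by
          rw [← mul_pow]; norm_num]
        rw [one_smul]
      rw [this, h2, smul_smul, hw]
    rw [h3, haa, hyy, smul_smul]
    congr 1
    field_simp
  have hwn : weakNorm r yy ≤ 1 := by
    have hwb : weakNorm r w ≤ β0 := by
      refine weakNorm_le hr0.ne' _ fun φ hφ => ?_
      have hsum_eq : ∑ k : Fin (m_ N), |φ (w k)| ^ r = ∑ j ∈ sN, |φ (y j)| ^ r := by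
        rw [hsN, Finset.sum_image hinj, ← Fin.sum_univ_eq_sum_range
          (fun k => |φ (y (Nat.pairEquiv (N, k)))| ^ r)]
      rw [hsum_eq]
      exact hyb φ hφ sN
    have := weakNorm_smul hr0 (inv_pos.mpr hb1) w
    rw [hyy, this]
    calc (β0 + 1)⁻¹ * weakNorm r w ≤ (β0 + 1)⁻¹ * (β0 + 1) := by
          apply mul_le_mul_of_nonneg_left ?_ (by positivity)
          linarith
      _ = 1 := inv_mul_cancel₀ hb1.ne'
  have hlt := hx2 N aa yy hfact hwn
  have hbig : ((∑ k, |aa k| ^ r') : ℝ) ^ (1 / r') ≤ ((β0 + 1) * 2 ^ N) * α := by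
    rw [haa]
    rw [sum_abs_rpow_smul (by positivity) hr'0 Finset.univ
      (fun k : Fin (m_ N) => a (Nat.pairEquiv (N, (k : ℕ))))]
    refine mul_le_mul_of_nonneg_left ?_ (by positivity)
    refine Real.rpow_le_rpow
      (Finset.sum_nonneg fun k _ => Real.rpow_nonneg (abs_nonneg _) _) ?_ (by positivity)
    have hsum_eq : ∑ k : Fin (m_ N), |a (Nat.pairEquiv (N, (k : ℕ)))| ^ r'
        = ∑ j ∈ sN, |a j| ^ r' := by
      rw [hsN, Finset.sum_image hinj, ← Fin.sum_univ_eq_sum_range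
        (fun k => |a (Nat.pairEquiv (N, k))| ^ r')]
    rw [hsum_eq]
    exact Summable.sum_le_tsum sN (fun j _ => Real.rpow_nonneg (abs_nonneg _) _) hsa
  have h4 : ((4:ℝ)) ^ N = 2 ^ N * 2 ^ N := by rw [← mul_pow]; norm_num
  have h2pos : (0:ℝ) < 2 ^ N := by positivity
  have : ((β0 + 1) * 2 ^ N) * α = ((β0 + 1) * α) * 2 ^ N := by ring
  rw [this] at hbig
  have hfinal : ((β0 + 1) * α) * 2 ^ N < 2 ^ N * 2 ^ N :=
    mul_lt_mul_of_pos_right hN h2pos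
  rw [← h4] at hfinal
  linarith [hlt.trans_le hbig]

/-- The weak `p`-norm of a sequence. -/
noncomputable def weakSeqNorm {E : Type*} [NormedAddCommGroup E] [NormedSpace ℝ E]
    (p : ℝ) (x : ℕ → E) : ℝ :=
  sSup {r | ∃ φ : E →L[ℝ] ℝ, ‖φ‖ ≤ 1 ∧ r = (∑' j, |φ (x j)| ^ p) ^ (1 / p)}

/-- `A` is multiple `(q;p)`-summing with constant `C`. -/
def IsMultipleSumming {n : ℕ} {E : Fin n → Type*} [∀ i, NormedAddCommGroup (E i)]
    [∀ i, NormedSpace ℝ (E i)] {F : Type*} [NormedAddCommGroup F] [NormedSpace ℝ F]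
    (q p : ℝ) (A : ContinuousMultilinearMap ℝ E F) (C : ℝ) : Prop :=
  ∀ (m : ℕ) (x : ∀ i, Fin m → E i),
    (∑ j : Fin n → Fin m, ‖A (fun i => x i (j i))‖ ^ q) ^ (1 / q) ≤
      C * ∏ i, weakNorm p (x i)

variable {n : ℕ} {E : Fin n → Type*} [∀ i, NormedAddCommGroup (E i)]
  [∀ i, NormedSpace ℝ (E i)] [∀ i, CompleteSpace (E i)]
  {F : Type*} [NormedAddCommGroup F] [NormedSpace ℝ F] [CompleteSpace F]

theorem multiple_summing_of_factorization (r r' C : ℝ) (hr : 1 ≤ r)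
    (hrr' : 1 / r + 1 / r' = 1) (A : ContinuousMultilinearMap ℝ E F) (hC : 0 ≤ C)
    (hA : IsMultipleSumming r r A C)
    (hfact : ∀ i, ∀ x : ℕ → E i, MemWeakLp 1 x →
      ∃ (a : ℕ → ℝ) (y : ℕ → E i), (∀ j, x j = a j • y j) ∧
        Summable (fun j => |a j| ^ r') ∧ MemWeakLp r y) :
    ∃ C' ≥ (0 : ℝ), IsMultipleSumming 1 1 A C' := by
  have hr0 : (0:ℝ) < r := by linarith
  by_cases hn : n = 0
  · -- degenerate case: no variables
    subst hn
    refine ⟨C, hC, ?_⟩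
    intro m x
    have hA0 := hA m x
    have hprod : ∀ (p : ℝ), (∏ i : Fin 0, weakNorm p (x i)) = 1 := fun p => by simp
    rw [hprod] at hA0 ⊢
    have hsum : ∀ (q : ℝ), (∑ j : Fin 0 → Fin m, ‖A (fun i => x i (j i))‖ ^ q)
        = ‖A (fun i => x i ((default : Fin 0 → Fin m) i))‖ ^ q := fun q => Fintype.sum_unique _
    rw [hsum] at hA0 ⊢
    rw [← Real.rpow_mul (norm_nonneg _), mul_one_div, div_self hr0.ne', Real.rpow_one] at hA0
    rw [← Real.rpow_mul (norm_nonneg _)]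
    norm_num
    simpa using hA0
  · have hnn : Nonempty (Fin n) := ⟨⟨0, Nat.pos_of_ne_zero hn⟩⟩
    by_cases hr1 : r = 1
    · -- then r' = 0 and the factorization hypothesis is contradictory
      exfalso
      obtain ⟨i0⟩ := hnn
      have hr'0 : r' = 0 := by
        rw [hr1] at hrr'
        norm_num at hrr'
        exact hrr'
      have hmem : MemWeakLp 1 (fun _ : ℕ => (0 : E i0)) := by
        intro φ hφ
        have : (fun j : ℕ => |φ (0 : E i0)| ^ (1:ℝ)) = fun _ => 0 := by
          funext j; simp
        rw [this]; exact summable_zero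
      obtain ⟨a, y, -, hsum, -⟩ := hfact i0 (fun _ => 0) hmem
      rw [hr'0] at hsum
      have : (fun j : ℕ => |a j| ^ (0:ℝ)) = fun _ => (1:ℝ) := by
        funext j; rw [Real.rpow_zero]
      rw [this] at hsum
      exact one_ne_zero ((summable_const_iff (1:ℝ)).mp hsum)
    · -- main case
      have hr1' : 1 < r := lt_of_le_of_ne hr (Ne.symm hr1)
      obtain ⟨hr'1, -⟩ := conj_facts hr1' hrr'
      have hr'pos : (0:ℝ) < r' := by linarith
      have hpq : Real.HolderConjugate r' r := Real.holderConjugate_iff.mpr ⟨hr'1, by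
        rw [inv_eq_one_div, inv_eq_one_div]; linarith⟩
      have hu : ∀ i, ∃ D, 0 ≤ D ∧ ∀ (m : ℕ) (x : Fin m → E i),
          ∃ (a : Fin m → ℝ) (y : Fin m → E i),
            (∀ j, x j = a j • y j) ∧ (∑ j, |a j| ^ r') ^ (1 / r') ≤ D * weakNorm 1 x ∧
              weakNorm r y ≤ 1 := fun i => uniform_fact hr1' hrr' (hfact i)
      choose D hD0 hD using hu
      refine ⟨C * ∏ i, D i, mul_nonneg hC (Finset.prod_nonneg fun i _ => hD0 i), ?_⟩
      intro m x
      choose a y hfac hbound hwn using fun i => hD i m (x i)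
      have hterm : ∀ j : Fin n → Fin m, ‖A (fun i => x i (j i))‖
          = (∏ i, |a i (j i)|) * ‖A (fun i => y i (j i))‖ := by
        intro j
        have hx : (fun i => x i (j i)) = fun i => a i (j i) • y i (j i) :=
          funext fun i => hfac i (j i)
        rw [hx, A.map_smul_univ, norm_smul, Real.norm_eq_abs, Finset.abs_prod]
      have goal_eq : ((∑ j : Fin n → Fin m, ‖A (fun i => x i (j i))‖ ^ (1:ℝ)) : ℝ) ^ ((1:ℝ)/1)
          = ∑ j : Fin n → Fin m, ‖A (fun i => x i (j i))‖ := by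
        norm_num
      rw [goal_eq]
      have key : ∑ j : Fin n → Fin m, ‖A (fun i => x i (j i))‖
          ≤ (∑ j : Fin n → Fin m, (abs (∏ i, |a i (j i)|)) ^ r') ^ (1 / r') *
            (∑ j : Fin n → Fin m, (abs ‖A (fun i => y i (j i))‖) ^ r) ^ (1 / r) := by
        rw [Finset.sum_congr rfl fun j _ => hterm j]
        exact Real.inner_le_Lp_mul_Lq Finset.univ _ _ hpq
      -- bound the first factor
      have hfirst : ((∑ j : Fin n → Fin m, (abs (∏ i, |a i (j i)|)) ^ r') : ℝ) ^ (1 / r')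
          ≤ ∏ i, (D i * weakNorm 1 (x i)) := by
        have h1 : ∀ j : Fin n → Fin m, (abs (∏ i, |a i (j i)|)) ^ r' = ∏ i, |a i (j i)| ^ r' := by
          intro j
          rw [abs_of_nonneg (Finset.prod_nonneg fun i _ => abs_nonneg _),
            Real.finset_prod_rpow Finset.univ _ (fun i _ => abs_nonneg _)]
        rw [Finset.sum_congr rfl fun j _ => h1 j]
        have h2 : (∑ j : Fin n → Fin m, ∏ i, |a i (j i)| ^ r')
            = ∏ i, ∑ l : Fin m, |a i l| ^ r' :=
          (Fintype.prod_sum (fun (i : Fin n) (l : Fin m) => |a i l| ^ r')).symm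
        rw [h2, ← Real.finset_prod_rpow Finset.univ _
          (fun i _ => Finset.sum_nonneg fun l _ => Real.rpow_nonneg (abs_nonneg _) _)]
        refine Finset.prod_le_prod (fun i _ => Real.rpow_nonneg
          (Finset.sum_nonneg fun l _ => Real.rpow_nonneg (abs_nonneg _) _) _)
          (fun i _ => hbound i)
      -- bound the second factor
      have hsecond : ((∑ j : Fin n → Fin m, (abs ‖A (fun i => y i (j i))‖) ^ r) : ℝ) ^ (1 / r)
          ≤ C := by
        have h1 : ∀ j : Fin n → Fin m, (abs ‖A (fun i => y i (j i))‖) ^ r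
            = ‖A (fun i => y i (j i))‖ ^ r := fun j => by rw [abs_of_nonneg (norm_nonneg _)]
        rw [Finset.sum_congr rfl fun j _ => h1 j]
        calc ((∑ j : Fin n → Fin m, ‖A (fun i => y i (j i))‖ ^ r) : ℝ) ^ (1 / r)
            ≤ C * ∏ i, weakNorm r (y i) := hA m y
          _ ≤ C * 1 := by
              refine mul_le_mul_of_nonneg_left ?_ hC
              exact Finset.prod_le_one (fun i _ => weakNorm_nonneg hr0 _) (fun i _ => hwn i)
          _ = C := mul_one _
      calc ∑ j : Fin n → Fin m, ‖A (fun i => x i (j i))‖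
          ≤ (∑ j : Fin n → Fin m, (abs (∏ i, |a i (j i)|)) ^ r') ^ (1 / r') *
            (∑ j : Fin n → Fin m, (abs ‖A (fun i => y i (j i))‖) ^ r) ^ (1 / r) := key
        _ ≤ (∏ i, (D i * weakNorm 1 (x i))) * C := by
            refine mul_le_mul hfirst hsecond
              (Real.rpow_nonneg (Finset.sum_nonneg fun j _ =>
                Real.rpow_nonneg (abs_nonneg _) _) _)
              (Finset.prod_nonneg fun i _ =>
                mul_nonneg (hD0 i) (weakNorm_nonneg one_pos _))
        _ = (C * ∏ i, D i) * ∏ i, weakNorm 1 (x i) := by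
            rw [Finset.prod_mul_distrib]; ring
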